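/- Under the noisy network model with three independent replicate observations (Y_{i,j}), (Y_{i,j,*}), (Y_{i,j,**}) of the same true adjacency matrix A, the statistic û₃ = (3N)^{-1} Σ_{i<j} I( Y_{i,j,**} − 2Y_{i,j,*} + Y_{i,j} ∈ {1, −2} ) satisfies E(û₃) = (1−δ)α(1−α)² + δβ²(1−β), where N = p(p−1)/2 and δ = N^{-1} Σ_{i<j} A_{i,j}. -/

import Mathlib

open MeasureTheory Finset

/-- The Bernoulli mass function on `{0,1}`: mass `q` at `1` and `1 − q` at `0`. -/
noncomputable def bernMass (q a : ℝ) : ℝ := if a = 1 then q else 1 - q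



lemma integrable_ite_one {Ω} [MeasurableSpace Ω] (μ : Measure Ω) [IsFiniteMeasure μ]
    {P : Ω → Prop} [DecidablePred P] (hs : MeasurableSet {ω | P ω}) :
    Integrable (fun ω => if P ω then (1:ℝ) else 0) μ := by
  have h := (integrable_const (1:ℝ)).indicator (μ := μ) hs
  have heq : (fun ω => if P ω then (1:ℝ) else 0) = {ω | P ω}.indicator (fun _ => (1:ℝ)) := by
    funext ω
    simp [Set.indicator_apply]
  rw [heq]; exact h

lemma integral_ite_one {Ω} [MeasurableSpace Ω] (μ : Measure Ω) [IsFiniteMeasure μ]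
    {P : Ω → Prop} [DecidablePred P] (hs : MeasurableSet {ω | P ω}) :
    ∫ ω, (if P ω then (1:ℝ) else 0) ∂μ = (μ {ω | P ω}).toReal := by
  rw [← measureReal_def, ← integral_indicator_one hs]
  congr 1; funext ω; simp [Set.indicator_apply]

lemma pair_integral {Ω} [MeasurableSpace Ω] (μ : Measure Ω) [IsProbabilityMeasure μ]
    (X1 X2 X3 : Ω → ℝ) (h1 : Measurable X1) (h2 : Measurable X2) (h3 : Measurable X3)
    (e1 : ∀ ω, X1 ω = 0 ∨ X1 ω = 1) (e2 : ∀ ω, X2 ω = 0 ∨ X2 ω = 1)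
    (e3 : ∀ ω, X3 ω = 0 ∨ X3 ω = 1)
    (q : ℝ) (hq0 : 0 ≤ q) (hq1 : q ≤ 1)
    (hj : ∀ a b c : ℝ, (a = 0 ∨ a = 1) → (b = 0 ∨ b = 1) → (c = 0 ∨ c = 1) →
      μ {ω | X1 ω = a ∧ X2 ω = b ∧ X3 ω = c} =
        ENNReal.ofReal (bernMass q a * bernMass q b * bernMass q c)) :
    ∫ ω, (if X3 ω - 2 * X2 ω + X1 ω = 1 ∨ X3 ω - 2 * X2 ω + X1 ω = -2
      then (1:ℝ) else 0) ∂μ = 3 * (q * (1 - q) ^ 2) := by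
  have ms : ∀ (a b c : ℝ), MeasurableSet {ω | X1 ω = a ∧ X2 ω = b ∧ X3 ω = c} := by
    intro a b c
    exact ((h1 (measurableSet_singleton a)).inter
      ((h2 (measurableSet_singleton b)).inter (h3 (measurableSet_singleton c))))
  have key : ∀ ω, (if X3 ω - 2 * X2 ω + X1 ω = 1 ∨ X3 ω - 2 * X2 ω + X1 ω = -2
      then (1:ℝ) else 0) =
      (if X1 ω = 1 ∧ X2 ω = 0 ∧ X3 ω = 0 then (1:ℝ) else 0) +
      (if X1 ω = 0 ∧ X2 ω = 0 ∧ X3 ω = 1 then (1:ℝ) else 0) +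
      (if X1 ω = 0 ∧ X2 ω = 1 ∧ X3 ω = 0 then (1:ℝ) else 0) := by
    intro ω
    rcases e1 ω with ha | ha <;> rcases e2 ω with hb | hb <;> rcases e3 ω with hc | hc <;>
      simp [ha, hb, hc] <;> norm_num
  rw [show (fun ω => (if X3 ω - 2 * X2 ω + X1 ω = 1 ∨ X3 ω - 2 * X2 ω + X1 ω = -2
      then (1:ℝ) else 0)) = fun ω =>
      (if X1 ω = 1 ∧ X2 ω = 0 ∧ X3 ω = 0 then (1:ℝ) else 0) +
      ((if X1 ω = 0 ∧ X2 ω = 0 ∧ X3 ω = 1 then (1:ℝ) else 0) +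
      (if X1 ω = 0 ∧ X2 ω = 1 ∧ X3 ω = 0 then (1:ℝ) else 0)) from funext fun ω => by
        rw [key ω]; ring]
  have iB : Integrable (fun ω => (if X1 ω = 0 ∧ X2 ω = 0 ∧ X3 ω = 1 then (1:ℝ) else 0) +
      (if X1 ω = 0 ∧ X2 ω = 1 ∧ X3 ω = 0 then (1:ℝ) else 0)) μ :=
    (integrable_ite_one μ (ms 0 0 1)).add (integrable_ite_one μ (ms 0 1 0))
  rw [integral_add (integrable_ite_one μ (ms 1 0 0)) iB,
    integral_add (integrable_ite_one μ (ms 0 0 1)) (integrable_ite_one μ (ms 0 1 0)),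
    integral_ite_one μ (ms 1 0 0), integral_ite_one μ (ms 0 0 1),
    integral_ite_one μ (ms 0 1 0),
    hj 1 0 0 (Or.inr rfl) (Or.inl rfl) (Or.inl rfl),
    hj 0 0 1 (Or.inl rfl) (Or.inl rfl) (Or.inr rfl),
    hj 0 1 0 (Or.inl rfl) (Or.inr rfl) (Or.inl rfl)]
  have h1q : (0:ℝ) ≤ 1 - q := by linarith
  simp only [bernMass]
  norm_num
  rw [ENNReal.toReal_ofReal (by positivity), ENNReal.toReal_ofReal (by positivity),
    ENNReal.toReal_ofReal (by positivity)]
  ring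

lemma card_lt_pairs (p : ℕ) :
    2 * (univ.filter (fun q : Fin p × Fin p => q.1 < q.2)).card = p * p - p := by
  classical
  set T := univ.filter (fun q : Fin p × Fin p => q.1 < q.2) with hT
  set Tg := univ.filter (fun q : Fin p × Fin p => q.2 < q.1) with hTg
  have himg : T.image Prod.swap = Tg := by
    ext q
    simp only [hT, hTg, Finset.mem_image, Finset.mem_filter, Finset.mem_univ, true_and]
    constructor
    · rintro ⟨a, ha, rfl⟩; exact ha
    · intro h; exact ⟨q.swap, h, q.swap_swap⟩
  have hcard : T.card = Tg.card := by
    rw [← himg, Finset.card_image_of_injective _ Prod.swap_injective]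
  have hunion : T ∪ Tg = (univ : Finset (Fin p)).offDiag := by
    ext q
    simp only [hT, hTg, Finset.mem_union, Finset.mem_filter, Finset.mem_univ, true_and,
      Finset.mem_offDiag]
    constructor
    · rintro (h | h)
      exacts [ne_of_lt h, (ne_of_lt h).symm]
    · exact fun h => lt_or_gt_of_ne h
  have hdisj : Disjoint T Tg := by
    rw [Finset.disjoint_left]
    intro q hq hq'
    simp only [hT, hTg, Finset.mem_filter] at hq hq'
    exact absurd hq'.2 (lt_asymm hq.2)
  have := Finset.card_union_of_disjoint hdisj
  rw [hunion, Finset.offDiag_card, ← hcard] at this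
  simp [Finset.card_univ] at this
  omega

/-- Under the noisy network model with three independent replicate observations
`Y`, `Y*`, `Y**` of the same true adjacency matrix `A`, the statistic
`û₃ = (3N)⁻¹ ∑_{i<j} I(Y**ᵢⱼ − 2Y*ᵢⱼ + Yᵢⱼ ∈ {1, −2})` has expectation
`(1−δ)α(1−α)² + δβ²(1−β)`, where `N = p(p−1)/2` and `δ = N⁻¹ ∑_{i<j} Aᵢⱼ`. -/
theorem expectation_u3hat
    {Ω : Type*} [MeasurableSpace Ω] (μ : Measure Ω) [IsProbabilityMeasure μ]
    (p : ℕ) (hp : 2 ≤ p)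
    (A : Fin p → Fin p → ℝ)
    (hA01 : ∀ i j, A i j = 0 ∨ A i j = 1)
    (hAsym : ∀ i j, A i j = A j i) (hAdiag : ∀ i, A i i = 0)
    (α β : ℝ) (hα0 : 0 ≤ α) (hα1 : α ≤ 1) (hβ0 : 0 ≤ β) (hβ1 : β ≤ 1)
    (hαβ : α + β ≤ 1)
    (Y Ystar Ystarstar : Fin p → Fin p → Ω → ℝ)
    (hYmeas : ∀ i j, Measurable (Y i j)) (hYstarmeas : ∀ i j, Measurable (Ystar i j))
    (hYssmeas : ∀ i j, Measurable (Ystarstar i j))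
    (hY01 : ∀ i j ω, Y i j ω = 0 ∨ Y i j ω = 1)
    (hYstar01 : ∀ i j ω, Ystar i j ω = 0 ∨ Ystar i j ω = 1)
    (hYss01 : ∀ i j ω, Ystarstar i j ω = 0 ∨ Ystarstar i j ω = 1)
    (hjoint : ∀ i j, i < j → ∀ a b c : ℝ,
      (a = 0 ∨ a = 1) → (b = 0 ∨ b = 1) → (c = 0 ∨ c = 1) →
      μ {ω | Y i j ω = a ∧ Ystar i j ω = b ∧ Ystarstar i j ω = c} =
        ENNReal.ofReal (bernMass (if A i j = 1 then 1 - β else α) a *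
          bernMass (if A i j = 1 then 1 - β else α) b *
          bernMass (if A i j = 1 then 1 - β else α) c))
    (N δ : ℝ)
    (hN : N = (p : ℝ) * ((p : ℝ) - 1) / 2)
    (hδ : δ = N⁻¹ * ∑ q ∈ univ.filter (fun q : Fin p × Fin p => q.1 < q.2), A q.1 q.2) :
    ∫ ω, (3 * N)⁻¹ * ∑ q ∈ univ.filter (fun q : Fin p × Fin p => q.1 < q.2),
        (if Ystarstar q.1 q.2 ω - 2 * Ystar q.1 q.2 ω + Y q.1 q.2 ω = 1 ∨
            Ystarstar q.1 q.2 ω - 2 * Ystar q.1 q.2 ω + Y q.1 q.2 ω = -2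
          then (1 : ℝ) else 0) ∂μ
      = (1 - δ) * α * (1 - α) ^ 2 + δ * β ^ 2 * (1 - β) := by
  classical
  set T := univ.filter (fun q : Fin p × Fin p => q.1 < q.2) with hTdef
  have hp2 : (2:ℝ) ≤ (p:ℝ) := by exact_mod_cast hp
  have hNpos : (0:ℝ) < N := by rw [hN]; nlinarith
  have hNne : N ≠ 0 := ne_of_gt hNpos
  -- cardinality of T
  have hTcard2 : 2 * T.card = p * p - p := card_lt_pairs p
  have hple : p ≤ p * p := Nat.le_mul_of_pos_left p (by omega)
  have hcardN : (T.card : ℝ) = N := by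
    have h2 : ((2 * T.card : ℕ) : ℝ) = ((p * p - p : ℕ) : ℝ) := by exact_mod_cast hTcard2
    rw [Nat.cast_sub hple] at h2
    push_cast at h2
    rw [hN]; linarith
  -- measurability of the condition sets
  have msCond : ∀ i j : Fin p, MeasurableSet
      {ω | Ystarstar i j ω - 2 * Ystar i j ω + Y i j ω = 1 ∨
        Ystarstar i j ω - 2 * Ystar i j ω + Y i j ω = -2} := by
    intro i j
    have hf : Measurable (fun ω => Ystarstar i j ω - 2 * Ystar i j ω + Y i j ω) :=
      ((hYssmeas i j).sub (measurable_const.mul (hYstarmeas i j))).add (hYmeas i j)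
    exact (hf (measurableSet_singleton 1)).union (hf (measurableSet_singleton (-2)))
  have hintg : ∀ q ∈ T, Integrable (fun ω =>
      (if Ystarstar q.1 q.2 ω - 2 * Ystar q.1 q.2 ω + Y q.1 q.2 ω = 1 ∨
          Ystarstar q.1 q.2 ω - 2 * Ystar q.1 q.2 ω + Y q.1 q.2 ω = -2
        then (1:ℝ) else 0)) μ := fun q _ => integrable_ite_one μ (msCond q.1 q.2)
  -- per-pair integral
  have hint : ∀ q ∈ T, ∫ ω,
      (if Ystarstar q.1 q.2 ω - 2 * Ystar q.1 q.2 ω + Y q.1 q.2 ω = 1 ∨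
          Ystarstar q.1 q.2 ω - 2 * Ystar q.1 q.2 ω + Y q.1 q.2 ω = -2
        then (1:ℝ) else 0) ∂μ
      = 3 * (A q.1 q.2 * (β ^ 2 * (1 - β)) + (1 - A q.1 q.2) * (α * (1 - α) ^ 2)) := by
    intro q hq
    have hlt : q.1 < q.2 := (Finset.mem_filter.mp hq).2
    set r : ℝ := if A q.1 q.2 = 1 then 1 - β else α with hr
    have hr0 : 0 ≤ r := by rw [hr]; split <;> linarith
    have hr1 : r ≤ 1 := by rw [hr]; split <;> linarith
    have := pair_integral μ (Y q.1 q.2) (Ystar q.1 q.2) (Ystarstar q.1 q.2)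
      (hYmeas q.1 q.2) (hYstarmeas q.1 q.2) (hYssmeas q.1 q.2)
      (hY01 q.1 q.2) (hYstar01 q.1 q.2) (hYss01 q.1 q.2) r hr0 hr1
      (hjoint q.1 q.2 hlt)
    rw [this]
    rcases hA01 q.1 q.2 with h | h
    · rw [hr, h]; norm_num
    · rw [hr, h]; norm_num; ring
  -- put everything together
  rw [integral_const_mul, integral_finset_sum T hintg,
    Finset.sum_congr rfl hint]
  have hsum : ∑ q ∈ T,
      (3 * (A q.1 q.2 * (β ^ 2 * (1 - β)) + (1 - A q.1 q.2) * (α * (1 - α) ^ 2)))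
      = (3 * (β ^ 2 * (1 - β)) - 3 * (α * (1 - α) ^ 2)) * (∑ q ∈ T, A q.1 q.2)
        + (T.card : ℝ) * (3 * (α * (1 - α) ^ 2)) := by
    rw [Finset.mul_sum]
    rw [show ((T.card : ℝ) * (3 * (α * (1 - α) ^ 2))) =
      ∑ _q ∈ T, (3 * (α * (1 - α) ^ 2)) by rw [Finset.sum_const, nsmul_eq_mul]]
    rw [← Finset.sum_add_distrib]
    exact Finset.sum_congr rfl fun q _ => by ring
  rw [hsum]
  have hS : ∑ q ∈ T, A q.1 q.2 = δ * N := by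
    rw [hδ]; field_simp
  rw [hS, hcardN]
  field_simp
  ring
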